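/- Let p₀,…,p_{ℓ−1} ∈ [0, ξ] ⊆ [0,1] and let (ξ_j)_{j≤ℓ} be a nondecreasing sequence in [0,1]. Then Σ_{j≤ℓ} (Σ_{u⊆{0,…,ℓ−1}, |u|=j} Π_{m∈u} p_m · Π_{m∉u} (1−p_m)) · (j/ℓ) · ξ_j ≤ Σ_{j≤ℓ} C(ℓ,j)·ξ^j·(1−ξ)^{ℓ−j}·(j/ℓ)·ξ_j. That is, the expression is maximized over p ∈ [0,ξ]^ℓ when all p_m = ξ. -/

import Mathlib

open scoped BigOperators
open Finset

lemma key_step {α : Type*} [DecidableEq α] (ξ : ℝ) (hξ0 : 0 ≤ ξ) (hξ1 : ξ ≤ 1)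
    (s : Finset α) :
    ∀ (p : α → ℝ), (∀ m ∈ s, 0 ≤ p m ∧ p m ≤ ξ) → ∀ f : ℕ → ℝ, Monotone f →
    ∑ u ∈ s.powerset, (∏ m ∈ u, p m) * (∏ m ∈ s \ u, (1 - p m)) * f u.card
      ≤ ∑ u ∈ s.powerset, ξ ^ u.card * (1 - ξ) ^ (s.card - u.card) * f u.card := by
  induction s using Finset.induction_on with
  | empty => intro p hp f hf; simp
  | @insert a s ha ih =>
    intro p hp f hf
    have hpa := hp a (mem_insert_self a s)
    have hps : ∀ m ∈ s, 0 ≤ p m ∧ p m ≤ ξ := fun m hm => hp m (mem_insert_of_mem hm)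
    set g : ℕ → ℝ := fun j => (1 - ξ) * f j + ξ * f (j + 1) with hg
    have hgmono : Monotone g := by
      intro i j hij
      have h1 := hf hij
      have h2 := hf (Nat.succ_le_succ hij)
      dsimp [g]
      nlinarith
    have hW : ∀ u ∈ s.powerset, 0 ≤ (∏ m ∈ u, p m) * ∏ m ∈ s \ u, (1 - p m) := by
      intro u hu
      rw [mem_powerset] at hu
      apply mul_nonneg
      · exact prod_nonneg fun m hm => (hps m (hu hm)).1
      · exact prod_nonneg fun m hm => by
          have := (hps m (mem_sdiff.1 hm).1).2; linarith
    have hnotmem : ∀ u ∈ s.powerset, a ∉ u := fun u hu h =>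
      ha (mem_powerset.1 hu h)
    have L1 : ∀ u ∈ s.powerset,
        (∏ m ∈ u, p m) * (∏ m ∈ insert a s \ u, (1 - p m)) * f u.card
        = ((∏ m ∈ u, p m) * ∏ m ∈ s \ u, (1 - p m)) * ((1 - p a) * f u.card) := by
      intro u hu
      have h1 : insert a s \ u = insert a (s \ u) :=
        Finset.insert_sdiff_of_notMem _ (hnotmem u hu)
      have h2 : a ∉ s \ u := fun h => ha (mem_sdiff.1 h).1
      rw [h1, prod_insert h2]; ring
    have L2 : ∀ u ∈ s.powerset,
        (∏ m ∈ insert a u, p m) * (∏ m ∈ insert a s \ insert a u, (1 - p m))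
            * f (insert a u).card
        = ((∏ m ∈ u, p m) * ∏ m ∈ s \ u, (1 - p m)) * (p a * f (u.card + 1)) := by
      intro u hu
      have hau := hnotmem u hu
      have h1 : insert a s \ insert a u = s \ u := by
        ext x
        simp only [mem_sdiff, mem_insert, not_or]
        constructor
        · rintro ⟨hx1 | hx1, hx2, hx3⟩
          · exact absurd hx1 hx2
          · exact ⟨hx1, hx3⟩
        · rintro ⟨hx1, hx2⟩
          exact ⟨Or.inr hx1, fun h => ha (h ▸ hx1), hx2⟩
      rw [h1, prod_insert hau, card_insert_of_notMem hau]; ring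
    rw [Finset.sum_powerset_insert ha, Finset.sum_powerset_insert ha,
      ← Finset.sum_add_distrib, ← Finset.sum_add_distrib]
    calc
      ∑ u ∈ s.powerset,
          ((∏ m ∈ u, p m) * (∏ m ∈ insert a s \ u, (1 - p m)) * f u.card
            + (∏ m ∈ insert a u, p m) * (∏ m ∈ insert a s \ insert a u, (1 - p m))
              * f (insert a u).card)
          = ∑ u ∈ s.powerset, ((∏ m ∈ u, p m) * ∏ m ∈ s \ u, (1 - p m)) *
              ((1 - p a) * f u.card + p a * f (u.card + 1)) := by
            refine Finset.sum_congr rfl fun u hu => ?_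
            rw [L1 u hu, L2 u hu]; ring
      _ ≤ ∑ u ∈ s.powerset, ((∏ m ∈ u, p m) * ∏ m ∈ s \ u, (1 - p m)) * g u.card := by
            refine Finset.sum_le_sum fun u hu => ?_
            refine mul_le_mul_of_nonneg_left ?_ (hW u hu)
            have hfm := hf (Nat.le_succ u.card)
            dsimp [g]
            nlinarith [hpa.1, hpa.2]
      _ ≤ ∑ u ∈ s.powerset, ξ ^ u.card * (1 - ξ) ^ (s.card - u.card) * g u.card :=
            ih p hps g hgmono
      _ = ∑ u ∈ s.powerset,
            (ξ ^ u.card * (1 - ξ) ^ ((insert a s).card - u.card) * f u.card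
              + ξ ^ (insert a u).card * (1 - ξ) ^ ((insert a s).card - (insert a u).card)
                * f (insert a u).card) := by
            refine Finset.sum_congr rfl fun u hu => ?_
            have hau := hnotmem u hu
            have hcard : u.card ≤ s.card := card_le_card (mem_powerset.1 hu)
            rw [card_insert_of_notMem ha, card_insert_of_notMem hau,
              Nat.succ_sub hcard, Nat.succ_sub_succ]
            dsimp [g]
            ring

theorem stmt_12 (ℓ : ℕ) (ξ : ℝ) (hξ : ξ ∈ Set.Icc (0 : ℝ) 1)
    (p : Fin ℓ → ℝ) (hp : ∀ m, p m ∈ Set.Icc (0 : ℝ) ξ)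
    (ξs : ℕ → ℝ) (hbd : ∀ j, ξs j ∈ Set.Icc (0 : ℝ) 1) (hmono : Monotone ξs) :
    ∑ j ∈ Finset.range (ℓ + 1),
        (∑ u ∈ (Finset.univ : Finset (Fin ℓ)).powersetCard j,
            (∏ m ∈ u, p m) * ∏ m ∈ uᶜ, (1 - p m)) * ((j : ℝ) / ℓ) * ξs j
      ≤ ∑ j ∈ Finset.range (ℓ + 1),
          ((ℓ.choose j : ℝ) * ξ ^ j * (1 - ξ) ^ (ℓ - j)) * ((j : ℝ) / ℓ) * ξs j := by
  set f : ℕ → ℝ := fun j => (j : ℝ) / ℓ * ξs j with hfdef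
  have hf : Monotone f := by
    intro j k hjk
    have h1 : (j : ℝ) / ℓ ≤ (k : ℝ) / ℓ := by
      rw [div_eq_mul_inv, div_eq_mul_inv]
      exact mul_le_mul_of_nonneg_right (by exact_mod_cast hjk)
        (inv_nonneg.2 (Nat.cast_nonneg ℓ))
    exact mul_le_mul h1 (hmono hjk) (hbd j).1 (div_nonneg (Nat.cast_nonneg k) (Nat.cast_nonneg ℓ))
  have hcardu : (Finset.univ : Finset (Fin ℓ)).card = ℓ := by
    simp [Finset.card_univ]
  have hkey := key_step ξ hξ.1 hξ.2 (Finset.univ : Finset (Fin ℓ)) p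
    (fun m _ => ⟨(hp m).1, (hp m).2⟩) f hf
  calc
    ∑ j ∈ Finset.range (ℓ + 1),
        (∑ u ∈ (Finset.univ : Finset (Fin ℓ)).powersetCard j,
            (∏ m ∈ u, p m) * ∏ m ∈ uᶜ, (1 - p m)) * ((j : ℝ) / ℓ) * ξs j
        = ∑ u ∈ (Finset.univ : Finset (Fin ℓ)).powerset,
            (∏ m ∈ u, p m) * (∏ m ∈ Finset.univ \ u, (1 - p m)) * f u.card := by
          rw [Finset.sum_powerset, hcardu]
          refine Finset.sum_congr rfl fun j hj => ?_
          rw [Finset.sum_mul, Finset.sum_mul]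
          refine Finset.sum_congr rfl fun u hu => ?_
          have hcard : u.card = j := (Finset.mem_powersetCard.1 hu).2
          rw [Finset.compl_eq_univ_sdiff, hcard, mul_assoc]
    _ ≤ ∑ u ∈ (Finset.univ : Finset (Fin ℓ)).powerset,
            ξ ^ u.card * (1 - ξ) ^ ((Finset.univ : Finset (Fin ℓ)).card - u.card) * f u.card :=
          hkey
    _ = ∑ j ∈ Finset.range (ℓ + 1),
          ((ℓ.choose j : ℝ) * ξ ^ j * (1 - ξ) ^ (ℓ - j)) * ((j : ℝ) / ℓ) * ξs j := by
          rw [Finset.sum_powerset, hcardu]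
          refine Finset.sum_congr rfl fun j hj => ?_
          have : ∀ u ∈ (Finset.univ : Finset (Fin ℓ)).powersetCard j,
              ξ ^ u.card * (1 - ξ) ^ (ℓ - u.card) * f u.card
                = ξ ^ j * (1 - ξ) ^ (ℓ - j) * f j := by
            intro u hu
            rw [(Finset.mem_powersetCard.1 hu).2]
          rw [Finset.sum_congr rfl this, Finset.sum_const, Finset.card_powersetCard, hcardu,
            nsmul_eq_mul]
          dsimp [f]
          ring
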